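/- For every finite forest F = (V, E) (a simple graph with no cycles) and all elements v, x, y of a field such that x + y is invertible, the subgraph counting polynomial is obtained from the subgraph component polynomial by the substitution H(F, v, x, y) = Q(F, v·(x + y), x·(x + y)⁻¹). -/

import Mathlib

open Finset

/-- The edge set of a simple graph on a finite vertex type, as a `Finset`. -/
noncomputable def edgeFinset' {α : Type*} [Fintype α] (G : SimpleGraph α) :
    Finset (Sym2 α) :=
  (Set.toFinite G.edgeSet).toFinset

/-- The number of connected components of a graph. -/
noncomputable def ncomp {α : Type*} (G : SimpleGraph α) : ℕ :=
  Nat.card G.ConnectedComponent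

/-- The Potts model `Z(G, x, y) = Σ_{A ⊆ E} x^{c(V,A)} y^{|A|}`, where `c(V,A)` is the
number of connected components of the spanning subgraph `(V, A)`. -/
noncomputable def potts {α : Type*} [Fintype α] {R : Type*} [CommRing R]
    (G : SimpleGraph α) (x y : R) : R :=
  ∑ A ∈ (edgeFinset' G).powerset,
    x ^ ncomp (SimpleGraph.fromEdgeSet (A : Set (Sym2 α))) * y ^ A.card

/-- The subgraph counting polynomial
`H(G, v, x, y) = Σ_{(W,F), W ⊆ V, F ⊆ E(G[W])} v^{|W|} x^{c(W,F)} y^{|F|}`,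
where `c(W,F)` is the number of connected components of the graph `(W, F)`. -/
noncomputable def scp {α : Type*} [Fintype α] {R : Type*} [CommRing R]
    (G : SimpleGraph α) (v x y : R) : R :=
  ∑ W : Finset α, ∑ F ∈ (edgeFinset' (G.induce (W : Set α))).powerset,
    v ^ W.card * x ^ ncomp (SimpleGraph.fromEdgeSet (F : Set (Sym2 (W : Set α)))) * y ^ F.card

/-- The subgraph component polynomial `Q(G, v, x) = Σ_{W ⊆ V} v^{|W|} x^{k(G[W])}`. -/
noncomputable def subgraphCompPoly {α : Type*} [Fintype α] {R : Type*} [CommRing R]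
    (G : SimpleGraph α) (v x : R) : R :=
  ∑ W : Finset α, v ^ W.card * x ^ ncomp (G.induce (W : Set α))

/-- The number of bad monochromatic edges of a coloring `φ : α → Fin x` (colors `1, …, x`
identified with `Fin x` via `c ↦ c + 1`): edges all of whose vertices get the same color
`c ≤ y`, i.e. `(c : ℕ) < y`. -/
noncomputable def badCount {α : Type*} {x : ℕ} (G : SimpleGraph α) (y : ℕ)
    (φ : α → Fin x) : ℕ :=
  {e ∈ G.edgeSet | ∃ c : Fin x, (c : ℕ) < y ∧ ∀ w ∈ e, φ w = c}.ncard

/-- The number of monochromatic edges of a coloring `φ : α → Fin x`. -/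
noncomputable def monoCount {α : Type*} {x : ℕ} (G : SimpleGraph α)
    (φ : α → Fin x) : ℕ :=
  {e ∈ G.edgeSet | ∃ c : Fin x, ∀ w ∈ e, φ w = c}.ncard

/-- The bad coloring polynomial `χ̃(G, x, z) = Σ_{φ : V → {1,…,x}} z^{m(φ)}`, where `m(φ)`
is the number of monochromatic edges of `φ`. -/
noncomputable def badChrom {α : Type*} [Fintype α] [DecidableEq α] {R : Type*} [CommRing R]
    (G : SimpleGraph α) (x : ℕ) (z : R) : R :=
  ∑ φ : α → Fin x, z ^ monoCount G φ

/-- The trivariate chromatic polynomial `P̃(G, x, y, z) = Σ_{φ : V → {1,…,x}} z^{b(φ)}`,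
where `b(φ)` is the number of bad monochromatic edges of `φ` (monochromatic in a color
`c ≤ y`). -/
noncomputable def triChrom {α : Type*} [Fintype α] [DecidableEq α] {R : Type*} [CommRing R]
    (G : SimpleGraph α) (x y : ℕ) (z : R) : R :=
  ∑ φ : α → Fin x, z ^ badCount G y φ

/-- The subgraph counting polynomial as a polynomial with integer coefficients in the
variables `v = X 0`, `x = X 1`, `y = X 2`. -/
noncomputable def scpPoly {α : Type*} [Fintype α] (G : SimpleGraph α) :
    MvPolynomial (Fin 3) ℤ :=
  scp G (MvPolynomial.X 0) (MvPolynomial.X 1) (MvPolynomial.X 2)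

section Aux

open SimpleGraph Finset

variable {α : Type*}

lemma isAcyclic_anti {G H : SimpleGraph α} (hle : G ≤ H) (hH : H.IsAcyclic) : G.IsAcyclic :=
  fun _ c hc => hH (c.mapLe hle) ((SimpleGraph.Walk.mapLe_isCycle hle).mpr hc)

lemma isAcyclic_induce {G : SimpleGraph α} (hG : G.IsAcyclic) (s : Set α) :
    (G.induce s).IsAcyclic := fun _ c hc =>
  hG (c.map (SimpleGraph.Embedding.induce (G := G) s).toHom)
    ((SimpleGraph.Walk.map_isCycle_iff_of_injective
      (SimpleGraph.Embedding.induce (G := G) s).injective).mpr hc)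

lemma ncomp_bot [Fintype α] : ncomp (⊥ : SimpleGraph α) = Fintype.card α := by
  rw [ncomp, ← Nat.card_eq_fintype_card]
  refine (Nat.card_eq_of_bijective (⊥ : SimpleGraph α).connectedComponentMk ⟨?_, ?_⟩).symm
  · intro u v huv
    have := (SimpleGraph.ConnectedComponent.eq).mp huv
    rwa [SimpleGraph.reachable_bot] at this
  · exact fun c => c.exists_rep

lemma reachable_cases {G : SimpleGraph α} {a b u v : α}
    (p : (G ⊔ SimpleGraph.edge a b).Walk u v) :
    G.Reachable u v ∨
      ((G.Reachable u a ∨ G.Reachable u b) ∧ (G.Reachable v a ∨ G.Reachable v b)) := by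
  induction p with
  | nil => exact Or.inl (Reachable.refl _)
  | @cons u m v huw q ih =>
    rcases (SimpleGraph.sup_adj _ _ _ _).mp huw with hG | hE
    · rcases ih with hwv | ⟨hw, hv⟩
      · exact Or.inl (hG.reachable.trans hwv)
      · exact Or.inr ⟨hw.imp hG.reachable.trans hG.reachable.trans, hv⟩
    · rw [SimpleGraph.edge_adj] at hE
      obtain ⟨(⟨rfl, rfl⟩ | ⟨rfl, rfl⟩), hne⟩ := hE
      · refine Or.inr ⟨Or.inl (Reachable.refl _), ?_⟩
        rcases ih with hwv | ⟨_, hv⟩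
        · exact Or.inr hwv.symm
        · exact hv
      · refine Or.inr ⟨Or.inr (Reachable.refl _), ?_⟩
        rcases ih with hwv | ⟨_, hv⟩
        · exact Or.inl hwv.symm
        · exact hv

lemma ncomp_sup_edge [Fintype α] {G : SimpleGraph α} {a b : α}
    (hr : ¬ G.Reachable a b) :
    ncomp (G ⊔ SimpleGraph.edge a b) + 1 = ncomp G := by
  classical
  have hab : a ≠ b := fun hh => hr (hh ▸ Reachable.refl a)
  set G' := G ⊔ SimpleGraph.edge a b with hG'
  have hle : G ≤ G' := le_sup_left
  let f : G.ConnectedComponent → G'.ConnectedComponent :=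
    SimpleGraph.ConnectedComponent.map (SimpleGraph.Hom.ofLE hle)
  have hf : ∀ u : α, f (G.connectedComponentMk u) = G'.connectedComponentMk u := fun u => rfl
  have hadj : G'.Adj a b := by
    refine (SimpleGraph.sup_adj _ _ _ _).mpr (Or.inr ?_)
    rw [SimpleGraph.edge_adj]
    exact ⟨Or.inl ⟨rfl, rfl⟩, hab⟩
  have key : ∀ u w : α, ¬ G.Reachable u b → ¬ G.Reachable w b →
      G'.Reachable u w → G.Reachable u w := by
    intro u w hu hw huw
    obtain ⟨p⟩ := huw
    rcases reachable_cases p with hh | ⟨h1, h2⟩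
    · exact hh
    · exact (h1.resolve_right hu).trans (h2.resolve_right hw).symm
  have hbij : Function.Bijective
      (fun c : {c : G.ConnectedComponent // c ≠ G.connectedComponentMk b} => f c.1) := by
    constructor
    · rintro ⟨c, hc⟩ ⟨d, hd⟩ hcd
      obtain ⟨u, rfl⟩ := c.exists_rep
      obtain ⟨w, rfl⟩ := d.exists_rep
      simp only [hf] at hcd
      have hu : ¬ G.Reachable u b := fun hh => hc (SimpleGraph.ConnectedComponent.sound hh)
      have hw : ¬ G.Reachable w b := fun hh => hd (SimpleGraph.ConnectedComponent.sound hh)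
      have := key u w hu hw ((SimpleGraph.ConnectedComponent.eq).mp hcd)
      exact Subtype.ext (SimpleGraph.ConnectedComponent.sound this)
    · intro c'
      obtain ⟨u, rfl⟩ := c'.exists_rep
      by_cases hu : G.Reachable u b
      · refine ⟨⟨G.connectedComponentMk a, fun hh => hr ((SimpleGraph.ConnectedComponent.eq).mp hh)⟩, ?_⟩
        show f _ = _
        rw [hf]
        exact SimpleGraph.ConnectedComponent.sound (hadj.reachable.trans (hu.mono hle).symm)
      · exact ⟨⟨G.connectedComponentMk u, fun hh => hu ((SimpleGraph.ConnectedComponent.eq).mp hh)⟩, rfl⟩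
  have h1 : Nat.card G'.ConnectedComponent
      = Nat.card {c : G.ConnectedComponent // c ≠ G.connectedComponentMk b} :=
    (Nat.card_eq_of_bijective _ hbij).symm
  have : Fintype G.ConnectedComponent := Fintype.ofFinite _
  have h2 : Nat.card {c : G.ConnectedComponent // c ≠ G.connectedComponentMk b}
      = Fintype.card G.ConnectedComponent - 1 := by
    rw [Nat.card_eq_fintype_card]
    have := Fintype.card_subtype_compl (fun c : G.ConnectedComponent => c = G.connectedComponentMk b)
    simp only [Fintype.card_subtype_eq] at this
    exact this
  have h3 : 1 ≤ Fintype.card G.ConnectedComponent :=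
    Fintype.card_pos_iff.mpr ⟨G.connectedComponentMk b⟩
  rw [ncomp, ncomp, h1, h2, Nat.card_eq_fintype_card]
  omega

lemma ncomp_insert [Fintype α] [DecidableEq α] [DecidableEq (Sym2 α)] (F : Finset (Sym2 α)) (a b : α) (hab : a ≠ b)
    (he : s(a, b) ∉ F)
    (hac : (SimpleGraph.fromEdgeSet ((insert s(a, b) F : Finset (Sym2 α)) : Set (Sym2 α))).IsAcyclic) :
    ncomp (SimpleGraph.fromEdgeSet ((insert s(a, b) F : Finset (Sym2 α)) : Set (Sym2 α))) + 1
      = ncomp (SimpleGraph.fromEdgeSet (F : Set (Sym2 α))) := by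
  have hsplit : (SimpleGraph.fromEdgeSet ((insert s(a, b) F : Finset (Sym2 α)) : Set (Sym2 α)))
      = SimpleGraph.fromEdgeSet (F : Set (Sym2 α)) ⊔ SimpleGraph.edge a b := by
    rw [Finset.coe_insert, Set.insert_eq, SimpleGraph.fromEdgeSet_union]
    exact sup_comm _ _
  rw [hsplit] at hac ⊢
  refine ncomp_sup_edge ?_
  intro hreach
  obtain ⟨w⟩ := hreach.symm
  let p := w.toPath
  have hle : SimpleGraph.fromEdgeSet (F : Set (Sym2 α))
      ≤ SimpleGraph.fromEdgeSet (F : Set (Sym2 α)) ⊔ SimpleGraph.edge a b := le_sup_left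
  have hadj : (SimpleGraph.fromEdgeSet (F : Set (Sym2 α)) ⊔ SimpleGraph.edge a b).Adj a b := by
    refine (SimpleGraph.sup_adj _ _ _ _).mpr (Or.inr ?_)
    rw [SimpleGraph.edge_adj]
    exact ⟨Or.inl ⟨rfl, rfl⟩, hab⟩
  have hpath : ((p : SimpleGraph.Walk _ b a).mapLe hle).IsPath := (SimpleGraph.Walk.mapLe_isPath hle).mpr p.2
  have hnotedge : s(a, b) ∉ ((p : SimpleGraph.Walk _ b a).mapLe hle).edges := by
    intro hmem
    rw [SimpleGraph.Walk.mapLe, SimpleGraph.Walk.edges_map] at hmem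
    simp only [List.mem_map] at hmem
    obtain ⟨e, heP, hmap⟩ := hmem
    have he2 : e ∈ (SimpleGraph.fromEdgeSet (F : Set (Sym2 α))).edgeSet :=
      SimpleGraph.Walk.edges_subset_edgeSet _ heP
    rw [SimpleGraph.edgeSet_fromEdgeSet] at he2
    have : e = s(a, b) := by
      simpa [SimpleGraph.Hom.ofLE_apply, Sym2.map_id'] using hmap
    exact he (by simpa [this] using he2.1)
  have hcyc := SimpleGraph.Path.cons_isCycle
    ⟨(p : SimpleGraph.Walk _ b a).mapLe hle, hpath⟩ hadj hnotedge
  exact hac _ hcyc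

lemma ncomp_fromEdgeSet_add_card [Fintype α] (F : Finset (Sym2 α)) :
    (∀ e ∈ F, ¬ e.IsDiag) → (SimpleGraph.fromEdgeSet (F : Set (Sym2 α))).IsAcyclic →
    ncomp (SimpleGraph.fromEdgeSet (F : Set (Sym2 α))) + F.card = Fintype.card α := by
  classical
  induction F using Finset.induction_on with
  | empty => intro _ _; simp [SimpleGraph.fromEdgeSet_empty, ncomp_bot]
  | @insert e F he ih =>
    revert he
    induction e using Sym2.ind with
    | _ a b =>
      intro he hd hac
      have hab : a ≠ b := by
        have := hd s(a, b) (Finset.mem_insert_self _ _)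
        simpa using this
      have hle : SimpleGraph.fromEdgeSet (F : Set (Sym2 α))
          ≤ SimpleGraph.fromEdgeSet ((insert s(a, b) F : Finset (Sym2 α)) : Set (Sym2 α)) := by
        apply SimpleGraph.fromEdgeSet_mono
        rw [Finset.coe_insert]
        exact Set.subset_insert _ _
      have hacF := isAcyclic_anti hle hac
      have hIH := ih (fun e heF => hd e (Finset.mem_insert_of_mem heF)) hacF
      have hstep := ncomp_insert F a b hab he hac
      rw [Finset.card_insert_of_notMem he]
      omega

end Aux

/-- For a forest `F` and field elements with `x + y` invertible,
`H(F, v, x, y) = Q(F, v·(x + y), x·(x + y)⁻¹)`. -/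
theorem scp_eq_subgraphCompPoly_of_isAcyclic {V : Type*} [Fintype V] {K : Type*}
    [Field K] (F : SimpleGraph V) (hF : F.IsAcyclic) (v x y : K) (h : x + y ≠ 0) :
    scp F v x y = subgraphCompPoly F (v * (x + y)) (x * (x + y)⁻¹) := by
  classical
  rw [scp, subgraphCompPoly]
  refine Finset.sum_congr rfl fun W _ => ?_
  set s : Set V := (W : Set V) with hs
  set H := F.induce s with hHdef
  have hHac : H.IsAcyclic := isAcyclic_induce hF s
  set E : Finset (Sym2 s) := edgeFinset' H with hE
  have hdiag : ∀ e ∈ E, ¬ e.IsDiag := by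
    intro e heE
    rw [hE, edgeFinset', Set.Finite.mem_toFinset] at heE
    exact H.not_isDiag_of_mem_edgeSet heE
  have hcoeE : (E : Set (Sym2 s)) = H.edgeSet := Set.Finite.coe_toFinset _
  have hcardV : Fintype.card s = W.card := by simp [hs]
  have hkey : ∀ F' ∈ E.powerset,
      ncomp (SimpleGraph.fromEdgeSet (F' : Set (Sym2 s))) + F'.card = W.card := by
    intro F' hF'
    rw [Finset.mem_powerset] at hF'
    rw [← hcardV]
    apply ncomp_fromEdgeSet_add_card
    · exact fun e he => hdiag e (hF' he)
    · refine isAcyclic_anti (H := SimpleGraph.fromEdgeSet (E : Set (Sym2 s)))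
        (SimpleGraph.fromEdgeSet_mono (by exact_mod_cast Finset.coe_subset.mpr hF')) ?_
      rw [hcoeE, SimpleGraph.fromEdgeSet_edgeSet]
      exact hHac
  have hkm : ncomp H + E.card = W.card := by
    have h0 := hkey E (Finset.mem_powerset_self E)
    rwa [hcoeE, SimpleGraph.fromEdgeSet_edgeSet] at h0
  calc ∑ F' ∈ E.powerset,
        v ^ W.card * x ^ ncomp (SimpleGraph.fromEdgeSet (F' : Set (Sym2 s))) * y ^ F'.card
      = ∑ F' ∈ E.powerset,
          (v ^ W.card * x ^ ncomp H) * (x ^ (E.card - F'.card) * y ^ F'.card) := by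
        refine Finset.sum_congr rfl fun F' hF' => ?_
        have h1 := hkey F' hF'
        have h2 : F'.card ≤ E.card := Finset.card_le_card (Finset.mem_powerset.mp hF')
        have h3 : ncomp (SimpleGraph.fromEdgeSet (F' : Set (Sym2 s)))
            = ncomp H + (E.card - F'.card) := by omega
        rw [h3, pow_add]
        ring
    _ = (v ^ W.card * x ^ ncomp H) * ∑ F' ∈ E.powerset, x ^ (E.card - F'.card) * y ^ F'.card := by
        rw [Finset.mul_sum]
    _ = (v ^ W.card * x ^ ncomp H) * (y + x) ^ E.card := by
        congr 1
        have hpa := Finset.prod_add (fun _ : Sym2 s => y) (fun _ : Sym2 s => x) E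
        simp only [Finset.prod_const] at hpa
        rw [hpa]
        refine Finset.sum_congr rfl fun t ht => ?_
        rw [Finset.card_sdiff_of_subset (Finset.mem_powerset.mp ht)]
        ring
    _ = (v * (x + y)) ^ W.card * (x * (x + y)⁻¹) ^ ncomp H := by
        have hne : (x + y) ^ ncomp H ≠ 0 := pow_ne_zero _ h
        have hxk : (x * (x + y)⁻¹) ^ ncomp H * (x + y) ^ ncomp H = x ^ ncomp H := by
          rw [← mul_pow, mul_assoc, inv_mul_cancel₀ h, mul_one]
        apply mul_right_cancel₀ hne
        rw [mul_assoc ((v * (x + y)) ^ W.card), hxk, ← hkm, mul_pow]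
        ring
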